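/- (Rankine–Hugoniot velocity for two interacting shocks in q-TAZRP.) Let 𝔞, β > 0 and θ be real with e^{θ+2β} < 𝔞, and let g(z) = 𝔞·(1 − e^{−βz}) on ℕ. Define r₀↑ := (1 − e^{−2β})·(𝔞 − e^{θ+2β}), r₊↑ := (1 − e^{−β})·(𝔞 − e^{θ+2β}), r↓ := (1 − e^{−β})·(𝔞 − e^{θ+β}), and the center-of-mass velocity C := r₀↑·r↓/(r↓ + r₀↑ − r₊↑). With the density ρ(τ) := Σ_{z=0}^∞ z·μ^τ(z), the Rankine–Hugoniot velocity of the pair of shocks equals C: (e^{θ+2β} − e^{θ})/(ρ(θ+2β) − ρ(θ)) = C. -/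

import Mathlib

open Real

noncomputable def gfact (g : ℕ → ℝ) (z : ℕ) : ℝ := ∏ y ∈ Finset.Icc 1 z, g y

noncomputable def ZN (g : ℕ → ℝ) (θ : ℝ) : ℝ := ∑' z : ℕ, exp (θ * z) / gfact g z

noncomputable def muN (g : ℕ → ℝ) (θ : ℝ) (z : ℕ) : ℝ := exp (θ * z) / (gfact g z * ZN g θ)

section Aux
open Filter

set_option maxHeartbeats 1000000


noncomputable def qfact (q : ℝ) (n : ℕ) : ℝ := ∏ y ∈ Finset.Icc 1 n, (1 - q ^ y)

lemma qfact_zero (q : ℝ) : qfact q 0 = 1 := by simp [qfact]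

lemma qfact_succ (q : ℝ) (n : ℕ) : qfact q (n+1) = qfact q n * (1 - q ^ (n+1)) := by
  unfold qfact
  rw [Finset.prod_Icc_succ_top (by omega)]

lemma qfact_pos {q : ℝ} (hq0 : 0 ≤ q) (hq1 : q < 1) (n : ℕ) : 0 < qfact q n := by
  apply Finset.prod_pos
  intro y hy
  have hy1 : y ≠ 0 := by
    have := (Finset.mem_Icc.mp hy).1; omega
  have : q ^ y < 1 := pow_lt_one₀ hq0 hq1 hy1
  linarith

lemma summable_aux {q x : ℝ} (hq0 : 0 < q) (hq1 : q < 1) (hx0 : 0 < x) (hx1 : x < 1) :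
    Summable (fun n : ℕ => ((n : ℝ) + 1) * x ^ n / qfact q n) := by
  set r : ℝ := (1 + x) / 2 with hr
  have hxr : x < r := by rw [hr]; linarith
  have hr1 : r < 1 := by rw [hr]; linarith
  apply summable_of_ratio_norm_eventually_le hr1
  have h1 : Tendsto (fun n : ℕ => x * (((n : ℝ) + 2) / ((n : ℝ) + 1))) atTop (nhds x) := by
    have : Tendsto (fun n : ℕ => ((n : ℝ) + 2) / ((n : ℝ) + 1)) atTop (nhds 1) := by
      have h0 : Tendsto (fun n : ℕ => 1 / ((n : ℝ) + 1)) atTop (nhds 0) :=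
        tendsto_one_div_add_atTop_nhds_zero_nat
      have := h0.const_add 1
      simp only [add_zero] at this
      convert this using 2 with n
      field_simp
      ring
    simpa using (tendsto_const_nhds.mul this)
  have h2 : Tendsto (fun n : ℕ => r * (1 - q ^ (n + 1))) atTop (nhds r) := by
    have h0 : Tendsto (fun n : ℕ => q ^ (n + 1)) atTop (nhds 0) := by
      have h := (tendsto_pow_atTop_nhds_zero_of_lt_one hq0.le hq1).const_mul q
      simp only [mul_zero] at h
      refine h.congr (fun n => ?_)
      ring
    have h3 : Tendsto (fun n : ℕ => 1 - q ^ (n + 1)) atTop (nhds (1 - 0)) :=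
      tendsto_const_nhds.sub h0
    simp only [sub_zero] at h3
    simpa using h3.const_mul r
  filter_upwards [h1.eventually_lt h2 hxr] with n hn
  have hqn : 0 < 1 - q ^ (n + 1) := by
    have : q ^ (n + 1) < 1 := pow_lt_one₀ hq0.le hq1 (by omega)
    linarith
  have hqf := qfact_pos hq0.le hq1 n
  have hn1 : (0:ℝ) < (n : ℝ) + 1 := by positivity
  rw [mul_div_assoc' x _ _, div_lt_iff₀ hn1] at hn
  rw [Real.norm_eq_abs, Real.norm_eq_abs,
    abs_of_nonneg (div_nonneg (by positivity) (qfact_pos hq0.le hq1 (n+1)).le),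
    abs_of_nonneg (div_nonneg (by positivity) hqf.le), qfact_succ]
  rw [div_le_iff₀ (mul_pos hqf hqn)]
  push_cast
  calc ((n : ℝ) + 1 + 1) * x ^ (n+1) = (x * ((n:ℝ)+2)) * x ^ n := by ring
    _ ≤ (r * (1 - q ^ (n + 1)) * ((n : ℝ) + 1)) * x ^ n := by
        apply mul_le_mul_of_nonneg_right (le_of_lt hn) (by positivity)
    _ = r * (((n : ℝ) + 1) * x ^ n / qfact q n) * (qfact q n * (1 - q ^ (n + 1))) := by
        field_simp

noncomputable def Zq (q x : ℝ) : ℝ := ∑' n : ℕ, x ^ n / qfact q n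
noncomputable def Sq (q x : ℝ) : ℝ := ∑' n : ℕ, (n : ℝ) * x ^ n / qfact q n

section
variable {q x : ℝ} (hq0 : 0 < q) (hq1 : q < 1) (hx0 : 0 < x) (hx1 : x < 1)
include hq0 hq1 hx0 hx1

lemma summable_Z : Summable (fun n : ℕ => x ^ n / qfact q n) := by
  refine (summable_aux hq0 hq1 hx0 hx1).of_nonneg_of_le (fun n => ?_) (fun n => ?_)
  · exact div_nonneg (by positivity) (qfact_pos hq0.le hq1 n).le
  · apply div_le_div_of_nonneg_right ?_ (qfact_pos hq0.le hq1 n).le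
    nlinarith [pow_nonneg hx0.le n, Nat.cast_nonneg (α := ℝ) n]

lemma summable_S : Summable (fun n : ℕ => (n : ℝ) * x ^ n / qfact q n) := by
  refine (summable_aux hq0 hq1 hx0 hx1).of_nonneg_of_le (fun n => ?_) (fun n => ?_)
  · exact div_nonneg (by positivity) (qfact_pos hq0.le hq1 n).le
  · apply div_le_div_of_nonneg_right ?_ (qfact_pos hq0.le hq1 n).le
    nlinarith [pow_nonneg hx0.le n, Nat.cast_nonneg (α := ℝ) n]

lemma Zq_pos : 0 < Zq q x := by
  apply Summable.tsum_pos (summable_Z hq0 hq1 hx0 hx1)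
    (fun n => div_nonneg (by positivity) (qfact_pos hq0.le hq1 n).le) 0
  rw [qfact_zero]; norm_num

lemma funA : Zq q (q * x) = (1 - x) * Zq q x := by
  have hqx0 : 0 < q * x := mul_pos hq0 hx0
  have hqx1 : q * x < 1 := by nlinarith
  have hZ := summable_Z hq0 hq1 hx0 hx1
  have hZq := summable_Z hq0 hq1 hqx0 hqx1
  have key : Zq q x - Zq q (q * x) = x * Zq q x := by
    unfold Zq
    rw [← Summable.tsum_sub hZ hZq]
    rw [Summable.tsum_eq_zero_add (hZ.sub hZq)]
    have h0 : x ^ 0 / qfact q 0 - (q * x) ^ 0 / qfact q 0 = 0 := by simp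
    rw [h0, zero_add, ← tsum_mul_left]
    congr 1
    funext n
    have hqn : (1 : ℝ) - q ^ (n + 1) ≠ 0 := by
      have : q ^ (n + 1) < 1 := pow_lt_one₀ hq0.le hq1 (by omega)
      linarith
    have hqf : qfact q n ≠ 0 := (qfact_pos hq0.le hq1 n).ne'
    rw [qfact_succ, mul_pow]
    field_simp
    ring
  linarith [key]

lemma funB : (1 - x) * Sq q x = Sq q (q * x) + x * Zq q x := by
  have hqx0 : 0 < q * x := mul_pos hq0 hx0
  have hqx1 : q * x < 1 := by nlinarith
  have hZ := summable_Z hq0 hq1 hx0 hx1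
  have hS := summable_S hq0 hq1 hx0 hx1
  have hSq := summable_S hq0 hq1 hqx0 hqx1
  have hrhs : x * (Sq q x + Zq q x) = ∑' n : ℕ, x * (((n:ℝ) + 1) * x ^ n / qfact q n) := by
    rw [tsum_mul_left]
    congr 1
    unfold Sq Zq
    rw [← Summable.tsum_add hS hZ]
    congr 1
    funext n
    ring
  have key : Sq q x - Sq q (q * x) = x * (Sq q x + Zq q x) := by
    rw [hrhs]
    unfold Sq
    rw [← Summable.tsum_sub hS hSq]
    rw [Summable.tsum_eq_zero_add (hS.sub hSq)]
    have h0 : ((0:ℕ):ℝ) * x ^ 0 / qfact q 0 - ((0:ℕ):ℝ) * (q * x) ^ 0 / qfact q 0 = 0 := by simp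
    rw [h0, zero_add]
    congr 1
    funext n
    have hqn : (1 : ℝ) - q ^ (n + 1) ≠ 0 := by
      have : q ^ (n + 1) < 1 := pow_lt_one₀ hq0.le hq1 (by omega)
      linarith
    have hqf : qfact q n ≠ 0 := (qfact_pos hq0.le hq1 n).ne'
    rw [qfact_succ, mul_pow]
    push_cast
    field_simp
    ring
  nlinarith [key]

lemma rho_step : Sq q x / Zq q x - Sq q (q * x) / Zq q (q * x) = x / (1 - x) := by
  have hZ := Zq_pos hq0 hq1 hx0 hx1
  have hA := funA hq0 hq1 hx0 hx1
  have hB := funB hq0 hq1 hx0 hx1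
  have hx1' : (0:ℝ) < 1 - x := by linarith
  have hS' : Sq q (q * x) = (1 - x) * Sq q x - x * Zq q x := by linarith
  rw [hA, hS']
  field_simp
  ring

end

lemma gfact_eq {𝔞 β : ℝ} (g : ℕ → ℝ) (hg : ∀ z : ℕ, g z = 𝔞 * (1 - exp (-β * z))) (n : ℕ) :
    gfact g n = 𝔞 ^ n * qfact (exp (-β)) n := by
  unfold gfact qfact
  calc ∏ y ∈ Finset.Icc 1 n, g y
      = ∏ y ∈ Finset.Icc 1 n, 𝔞 * (1 - exp (-β) ^ y) := by
        refine Finset.prod_congr rfl fun y _ => ?_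
        rw [hg y, mul_comm (-β) (y:ℝ), exp_nat_mul]
    _ = 𝔞 ^ n * qfact (exp (-β)) n := by
        rw [Finset.prod_mul_distrib, Finset.prod_const, Nat.card_Icc]
        simp [qfact]

lemma density_eq {𝔞 β : ℝ} (h𝔞 : 0 < 𝔞) (hβ : 0 < β)
    (g : ℕ → ℝ) (hg : ∀ z : ℕ, g z = 𝔞 * (1 - exp (-β * z)))
    (τ : ℝ) (hτ : exp τ < 𝔞) :
    (∑' z : ℕ, (z : ℝ) * muN g τ z)
      = Sq (exp (-β)) (exp τ / 𝔞) / Zq (exp (-β)) (exp τ / 𝔞) := by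
  set q : ℝ := exp (-β) with hq
  set x : ℝ := exp τ / 𝔞 with hx
  have hq0 : 0 < q := exp_pos _
  have hq1 : q < 1 := by rw [hq, exp_lt_one_iff]; linarith
  have hx0 : 0 < x := div_pos (exp_pos _) h𝔞
  have hx1 : x < 1 := (div_lt_one h𝔞).mpr hτ
  have hZpos := Zq_pos hq0 hq1 hx0 hx1
  have hZN : ZN g τ = Zq q x := by
    unfold ZN Zq
    congr 1
    funext z
    rw [gfact_eq g hg z, mul_comm τ (z:ℝ), exp_nat_mul, hx, div_pow, div_div]
  have hterm : (fun z : ℕ => (z : ℝ) * muN g τ z)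
      = fun z : ℕ => ((z : ℝ) * x ^ z / qfact q z) / Zq q x := by
    funext z
    unfold muN
    rw [hZN, gfact_eq g hg z, mul_comm τ (z:ℝ), exp_nat_mul, hx, div_pow]
    have h1 : (𝔞:ℝ) ^ z ≠ 0 := by positivity
    have h2 : qfact q z ≠ 0 := (qfact_pos hq0.le hq1 z).ne'
    field_simp
    rw [← hq, ← hx, mul_comm (qfact q z), mul_div_mul_right _ _ h2]
  rw [hterm, tsum_div_const]
  rfl

/-- Rankine–Hugoniot velocity for two interacting shocks in q-TAZRP equals the stationary
center-of-mass velocity `C = r₀↑·r↓ / (r↓ + r₀↑ - r₊↑)` of the two shock-walkers. -/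
theorem rankine_hugoniot_two_shocks
    (𝔞 β θ : ℝ) (h𝔞 : 0 < 𝔞) (hβ : 0 < β)
    (hbound : exp (θ + 2 * β) < 𝔞)
    (g : ℕ → ℝ) (hg : ∀ z : ℕ, g z = 𝔞 * (1 - exp (-β * z))) :
    (exp (θ + 2 * β) - exp θ) /
        ((∑' z : ℕ, (z : ℝ) * muN g (θ + 2 * β) z) - ∑' z : ℕ, (z : ℝ) * muN g θ z)
      = ((1 - exp (-2 * β)) * (𝔞 - exp (θ + 2 * β)))
          * ((1 - exp (-β)) * (𝔞 - exp (θ + β)))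
        / ((1 - exp (-β)) * (𝔞 - exp (θ + β))
            + (1 - exp (-2 * β)) * (𝔞 - exp (θ + 2 * β))
            - (1 - exp (-β)) * (𝔞 - exp (θ + 2 * β))) := by
  have hq0 : (0:ℝ) < exp (-β) := exp_pos _
  have hq1 : exp (-β) < 1 := by rw [exp_lt_one_iff]; linarith
  have hb1 : exp (θ + β) < exp (θ + 2 * β) := by
    apply exp_lt_exp.mpr; linarith
  have hb0 : exp θ < exp (θ + β) := by apply exp_lt_exp.mpr; linarith
  have hτ2 : exp (θ + 2 * β) < 𝔞 := hbound
  have hτ1 : exp (θ + β) < 𝔞 := by linarith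
  have hτ0 : exp θ < 𝔞 := by linarith
  set q : ℝ := exp (-β) with hq
  set x₂ : ℝ := exp (θ + 2 * β) / 𝔞 with hx₂
  set x₁ : ℝ := exp (θ + β) / 𝔞 with hx₁
  set x₀ : ℝ := exp θ / 𝔞 with hx₀
  have hx₂0 : 0 < x₂ := div_pos (exp_pos _) h𝔞
  have hx₁0 : 0 < x₁ := div_pos (exp_pos _) h𝔞
  have hx₂1 : x₂ < 1 := (div_lt_one h𝔞).mpr hτ2
  have hx₁1 : x₁ < 1 := (div_lt_one h𝔞).mpr hτ1
  have e21 : q * x₂ = x₁ := by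
    rw [hq, hx₂, hx₁, mul_div_assoc', ← exp_add]
    ring_nf
  have e10 : q * x₁ = x₀ := by
    rw [hq, hx₁, hx₀, mul_div_assoc', ← exp_add]
    ring_nf
  have h1 := rho_step hq0 hq1 hx₂0 hx₂1
  have h2 := rho_step hq0 hq1 hx₁0 hx₁1
  rw [e21] at h1
  rw [e10] at h2
  rw [density_eq h𝔞 hβ g hg _ hτ2, density_eq h𝔞 hβ g hg _ hτ0]
  have hden : Sq q x₂ / Zq q x₂ - Sq q x₀ / Zq q x₀ = x₂ / (1 - x₂) + x₁ / (1 - x₁) := by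
    linarith
  rw [hden]
  -- final algebra
  set t : ℝ := exp θ with ht
  set b : ℝ := exp β with hbb
  have hbpos : (0:ℝ) < b := exp_pos _
  have hb1' : (1:ℝ) < b := by
    rw [hbb, show (1:ℝ) = exp 0 from exp_zero.symm]
    exact exp_lt_exp.mpr hβ
  have htpos : (0:ℝ) < t := exp_pos _
  have eA : exp (θ + 2 * β) = t * (b * b) := by
    rw [ht, hbb, ← exp_add, ← exp_add]; ring_nf
  have eB : exp (θ + β) = t * b := by rw [ht, hbb, ← exp_add]
  have eq1 : q = b⁻¹ := by rw [hq, hbb, ← exp_neg]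
  have eq2 : exp (-2 * β) = (b * b)⁻¹ := by
    rw [hbb, ← exp_add, ← exp_neg]; ring_nf
  have hbA : t * (b * b) < 𝔞 := by rw [← eA]; exact hτ2
  have hbB : t * b < 𝔞 := by rw [← eB]; exact hτ1
  have hx₂' : x₂ = t * (b * b) / 𝔞 := by rw [hx₂, eA]
  have hx₁' : x₁ = t * b / 𝔞 := by rw [hx₁, eB]
  rw [hx₂', hx₁', eA, eB, eq2, eq1]
  have h1x₂ : (0:ℝ) < 1 - t * (b * b) / 𝔞 := by
    have : t * (b * b) / 𝔞 < 1 := (div_lt_one h𝔞).mpr hbA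
    linarith
  have h1x₁ : (0:ℝ) < 1 - t * b / 𝔞 := by
    have : t * b / 𝔞 < 1 := (div_lt_one h𝔞).mpr hbB
    linarith
  have hd1 : (0:ℝ) < t * (b * b) / 𝔞 / (1 - t * (b * b) / 𝔞) + t * b / 𝔞 / (1 - t * b / 𝔞) := by
    have := div_pos (div_pos (by positivity) h𝔞) h1x₂
    have := div_pos (div_pos (by positivity) h𝔞) h1x₁
    positivity
  have hd2 : (0:ℝ) < (1 - b⁻¹) * (𝔞 - t * b) + (1 - (b * b)⁻¹) * (𝔞 - t * (b * b))
      - (1 - b⁻¹) * (𝔞 - t * (b * b)) := by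
    have hbi : b⁻¹ < 1 := by rw [inv_lt_one_iff₀]; right; exact hb1'
    have hbbi : (b * b)⁻¹ < b⁻¹ := by
      apply inv_strictAnti₀ hbpos
      nlinarith
    have h₁ : (0:ℝ) < (1 - b⁻¹) * (𝔞 - t * b) := mul_pos (by linarith) (by linarith)
    have h₂ : (0:ℝ) < (b⁻¹ - (b * b)⁻¹) * (𝔞 - t * (b * b)) := mul_pos (by linarith) (by linarith)
    have hD : (1 - b⁻¹) * (𝔞 - t * b) + (1 - (b * b)⁻¹) * (𝔞 - t * (b * b))
        - (1 - b⁻¹) * (𝔞 - t * (b * b))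
        = (1 - b⁻¹) * (𝔞 - t * b) + (b⁻¹ - (b * b)⁻¹) * (𝔞 - t * (b * b)) := by ring
    linarith [hD.ge, hD.le]
  have hne1 : (t * (b * b) / 𝔞 / (1 - t * (b * b) / 𝔞) + t * b / 𝔞 / (1 - t * b / 𝔞)) ≠ 0 := hd1.ne'
  have hne2 : ((1 - b⁻¹) * (𝔞 - t * b) + (1 - (b * b)⁻¹) * (𝔞 - t * (b * b))
      - (1 - b⁻¹) * (𝔞 - t * (b * b))) ≠ 0 := hd2.ne'
  have hbne : b ≠ 0 := hbpos.ne'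
  have hane : 𝔞 ≠ 0 := h𝔞.ne'
  have h1x₂' : (1 - t * (b * b) / 𝔞) ≠ 0 := h1x₂.ne'
  have h1x₁' : (1 - t * b / 𝔞) ≠ 0 := h1x₁.ne'
  have hA' : 𝔞 - t * (b * b) ≠ 0 := by linarith
  have hB' : 𝔞 - t * b ≠ 0 := by linarith
  rw [div_eq_div_iff hne1 hne2]
  have hA2 : 𝔞 - t * b ^ 2 ≠ 0 := by rw [sq]; exact hA'
  field_simp
  ring
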